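/- (Finite U when X⋄ meets the interior of C) If X⋄ ∩ int C ≠ ∅, then: (i) every x⋄ ∈ X⋄ ∩ int C satisfies Ψ^H x⋄ = 0, so N(Ψ^H) ∩ C ≠ ∅; (ii) ∇L(x⋄) ∈ Re(R(Ψ)) = {Re(Ψ w) : w ∈ ℂ^{p'}} for every x⋄ ∈ X⋄ ∩ int C; and (iii) U is finite, i.e., there exists u ≥ 0 with X_u ∩ Q ≠ ∅. -/

import Mathlib

open Matrix
open scoped RealInnerProductSpace ENNReal

noncomputable section

def cnorm1 {n : ℕ} (z : Fin n → ℂ) : ℝ := ∑ j, ‖z j‖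

noncomputable def cnormInf {n : ℕ} (z : Fin n → ℂ) : ℝ := ⨆ j, ‖z j‖

def psiH {p p' : ℕ} (Ψ : Matrix (Fin p) (Fin p') ℂ) (x : EuclideanSpace ℝ (Fin p)) :
    Fin p' → ℂ :=
  Matrix.mulVec Ψᴴ fun i => (x i : ℂ)

def rePsi {p p' : ℕ} (Ψ : Matrix (Fin p) (Fin p') ℂ) (w : Fin p' → ℂ) :
    EuclideanSpace ℝ (Fin p) :=
  WithLp.toLp 2 (fun i => (Matrix.mulVec Ψ w i).re)

def Gset {n : ℕ} (s : Fin n → ℂ) : Set (Fin n → ℂ) :=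
  {w | ∀ j, ‖w j‖ ≤ 1 ∧ (s j ≠ 0 → w j = s j / (‖s j‖ : ℂ))}

def normalCone {p : ℕ} (C : Set (EuclideanSpace ℝ (Fin p))) (x : EuclideanSpace ℝ (Fin p)) :
    Set (EuclideanSpace ℝ (Fin p)) :=
  {a | ∀ y ∈ C, ⟪a, y - x⟫ ≤ 0}

def XuSet {p p' : ℕ} (C : Set (EuclideanSpace ℝ (Fin p))) (L : EuclideanSpace ℝ (Fin p) → ℝ)
    (Ψ : Matrix (Fin p) (Fin p') ℂ) (u : ℝ) : Set (EuclideanSpace ℝ (Fin p)) :=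
  {x ∈ C | ∀ χ ∈ C, L x + u * cnorm1 (psiH Ψ x) ≤ L χ + u * cnorm1 (psiH Ψ χ)}

def QSet {p p' : ℕ} (C : Set (EuclideanSpace ℝ (Fin p))) (Ψ : Matrix (Fin p) (Fin p') ℂ) :
    Set (EuclideanSpace ℝ (Fin p)) :=
  {x ∈ C | ∀ χ ∈ C, cnorm1 (psiH Ψ x) ≤ cnorm1 (psiH Ψ χ)}

def XdSet {p p' : ℕ} (C : Set (EuclideanSpace ℝ (Fin p))) (L : EuclideanSpace ℝ (Fin p) → ℝ)
    (Ψ : Matrix (Fin p) (Fin p') ℂ) : Set (EuclideanSpace ℝ (Fin p)) :=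
  {x ∈ QSet C Ψ | ∀ χ ∈ QSet C Ψ, L x ≤ L χ}

def Ubound {p p' : ℕ} (C : Set (EuclideanSpace ℝ (Fin p))) (L : EuclideanSpace ℝ (Fin p) → ℝ)
    (Ψ : Matrix (Fin p) (Fin p') ℂ) : ℝ≥0∞ :=
  sInf (ENNReal.ofReal '' {u : ℝ | 0 ≤ u ∧ (XuSet C L Ψ u ∩ QSet C Ψ).Nonempty})


section Aux

variable {p p' : ℕ} (Ψ : Matrix (Fin p) (Fin p') ℂ)

lemma cnorm1_nonneg {n : ℕ} (z : Fin n → ℂ) : 0 ≤ cnorm1 z :=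
  Finset.sum_nonneg fun _ _ => norm_nonneg _

lemma cnorm1_zero {n : ℕ} : cnorm1 (0 : Fin n → ℂ) = 0 := by simp [cnorm1]

lemma cnorm1_eq_zero {n : ℕ} {z : Fin n → ℂ} (h : cnorm1 z = 0) : z = 0 := by
  funext j
  have := (Finset.sum_eq_zero_iff_of_nonneg
    (fun i _ => norm_nonneg (z i))).mp h j (Finset.mem_univ j)
  simpa using this

lemma psiH_add (x y : EuclideanSpace ℝ (Fin p)) :
    psiH Ψ (x + y) = psiH Ψ x + psiH Ψ y := by
  have h : (fun i => ((x + y) i : ℂ)) = (fun i => (x i : ℂ)) + fun i => (y i : ℂ) := by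
    funext i; simp
  unfold psiH
  rw [h, Matrix.mulVec_add]

lemma psiH_sub (x y : EuclideanSpace ℝ (Fin p)) :
    psiH Ψ (x - y) = psiH Ψ x - psiH Ψ y := by
  have h : (fun i => ((x - y) i : ℂ)) = (fun i => (x i : ℂ)) - fun i => (y i : ℂ) := by
    funext i; simp
  unfold psiH
  rw [h, Matrix.mulVec_sub]

lemma psiH_smul (r : ℝ) (x : EuclideanSpace ℝ (Fin p)) :
    psiH Ψ (r • x) = (r : ℂ) • psiH Ψ x := by
  have h : (fun i => ((r • x) i : ℂ)) = (r : ℂ) • fun i => (x i : ℂ) := by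
    funext i; simp [Complex.real_smul]
  unfold psiH
  rw [h, Matrix.mulVec_smul]

lemma cnorm1_real_smul {n : ℕ} (r : ℝ) (z : Fin n → ℂ) :
    cnorm1 ((r : ℂ) • z) = |r| * cnorm1 z := by
  simp [cnorm1, Finset.mul_sum, Complex.norm_real, norm_mul]

lemma inner_rePsi (w : Fin p' → ℂ) (x : EuclideanSpace ℝ (Fin p)) :
    ⟪rePsi Ψ w, x⟫ = (∑ j, w j * (starRingEnd ℂ) (psiH Ψ x j)).re := by
  rw [PiLp.inner_apply]
  simp only [RCLike.inner_apply, conj_trivial]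
  simp only [rePsi, psiH, PiLp.toLp_apply, Matrix.mulVec, dotProduct, Matrix.conjTranspose_apply,
    map_sum, _root_.map_mul, Complex.conj_conj, Complex.conj_ofReal, Finset.mul_sum, Finset.sum_mul,
    Complex.re_sum]
  rw [Finset.sum_comm]
  congr 1
  funext i
  congr 1
  funext j
  simp [Complex.mul_re, Complex.ofReal_re, Complex.ofReal_im]
  ring

def rePsiLin {p p' : ℕ} (Ψ : Matrix (Fin p) (Fin p') ℂ) :
    (Fin p' → ℂ) →ₗ[ℝ] EuclideanSpace ℝ (Fin p) where
  toFun := rePsi Ψ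
  map_add' a b := by
    ext i
    simp [rePsi, Matrix.mulVec_add, PiLp.add_apply]
  map_smul' r a := by
    ext i
    simp [rePsi, Matrix.mulVec_smul, PiLp.smul_apply, Complex.real_smul]

lemma mem_orth_iff (v : EuclideanSpace ℝ (Fin p)) :
    v ∈ (LinearMap.range (rePsiLin Ψ))ᗮ ↔ psiH Ψ v = 0 := by
  rw [Submodule.mem_orthogonal]
  constructor
  · intro h
    funext j
    have h1 := h (rePsi Ψ (Pi.single j (psiH Ψ v j))) ⟨Pi.single j (psiH Ψ v j), rfl⟩
    rw [inner_rePsi] at h1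
    have h2 : ∑ j', (Pi.single j (psiH Ψ v j) : Fin p' → ℂ) j' * (starRingEnd ℂ) (psiH Ψ v j')
        = psiH Ψ v j * (starRingEnd ℂ) (psiH Ψ v j) := by
      rw [Finset.sum_eq_single j] <;> simp +contextual [Pi.single_apply]
    rw [h2, Complex.mul_conj] at h1
    simp only [Complex.ofReal_re] at h1
    simpa using Complex.normSq_eq_zero.mp h1
  · rintro h u ⟨w, rfl⟩
    show ⟪rePsi Ψ w, v⟫ = 0
    rw [inner_rePsi, h]
    simp

lemma grad_ineq {q : ℕ} {f : EuclideanSpace ℝ (Fin q) → ℝ} (hf : ConvexOn ℝ Set.univ f)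
    {x g : EuclideanSpace ℝ (Fin q)} (h : HasGradientAt f g x) (y : EuclideanSpace ℝ (Fin q)) :
    f x + ⟪g, y - x⟫ ≤ f y := by
  set φ : ℝ → ℝ := fun t => f (x + t • (y - x)) with hφ
  have hφc : ConvexOn ℝ Set.univ φ := by
    have h2 := hf.comp_affineMap (AffineMap.lineMap x y)
    have : φ = f ∘ (AffineMap.lineMap x y : ℝ →ᵃ[ℝ] EuclideanSpace ℝ (Fin q)) := by
      funext t
      simp [hφ, AffineMap.lineMap_apply, Function.comp]
      congr 1
      module
    rw [this]
    simpa using h2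
  have hline : HasDerivAt (fun t : ℝ => x + t • (y - x)) (y - x) 0 := by
    simpa using ((hasDerivAt_id (0:ℝ)).smul_const (y - x)).const_add x
  have hF : HasFDerivAt f (InnerProductSpace.toDual ℝ _ g) ((fun t : ℝ => x + t • (y - x)) 0) := by
    simpa using h.hasFDerivAt
  have hφd : HasDerivAt φ ⟪g, y - x⟫ 0 := by
    have := hF.comp_hasDerivAt 0 hline
    simp only [InnerProductSpace.toDual_apply_apply] at this
    exact this
  have hs := hφc.le_slope_of_hasDerivAt (Set.mem_univ (0:ℝ)) (Set.mem_univ 1) one_pos hφd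
  have h0 : φ 0 = f x := by simp [hφ]
  have h1 : φ 1 = f y := by simp [hφ]
  rw [slope_def_field, h0, h1] at hs
  simp only [sub_zero, div_one] at hs
  linarith

end Aux

theorem statement_10 {p p' : ℕ} (hp : 0 < p) (hp' : 0 < p')
    (C : Set (EuclideanSpace ℝ (Fin p))) (hCne : C.Nonempty) (hCcl : IsClosed C)
    (hCcv : Convex ℝ C)
    (L : EuclideanSpace ℝ (Fin p) → ℝ) (hLcv : ConvexOn ℝ Set.univ L)
    (gradL : EuclideanSpace ℝ (Fin p) → EuclideanSpace ℝ (Fin p))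
    (hLd : ∀ x, HasGradientAt L (gradL x) x)
    (hLb : BddBelow (L '' C))
    (Ψ : Matrix (Fin p) (Fin p') ℂ)
    (hint : (XdSet C L Ψ ∩ interior C).Nonempty) :
    (∀ xd ∈ XdSet C L Ψ ∩ interior C, psiH Ψ xd = 0) ∧
    (∃ x ∈ C, psiH Ψ x = 0) ∧
    (∀ xd ∈ XdSet C L Ψ ∩ interior C, ∃ w : Fin p' → ℂ, rePsi Ψ w = gradL xd) ∧
    (∃ u : ℝ, 0 ≤ u ∧ (XuSet C L Ψ u ∩ QSet C Ψ).Nonempty) := by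
  classical
  have key1 : ∀ xd ∈ XdSet C L Ψ ∩ interior C, psiH Ψ xd = 0 := by
    rintro x ⟨⟨⟨hxC, hxmin⟩, -⟩, hxint⟩
    obtain ⟨ε, hε, hball⟩ := Metric.isOpen_iff.mp isOpen_interior x hxint
    set t : ℝ := min (1/2) (ε / (2 * (‖x‖ + 1))) with htdef
    have hx1 : (0:ℝ) < ‖x‖ + 1 := by positivity
    have ht0 : 0 < t := lt_min (by norm_num) (by positivity)
    have ht1 : t ≤ 1/2 := min_le_left _ _
    have hdist : dist ((1 - t) • x) x < ε := by
      rw [dist_eq_norm]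
      have hmt : (1 - t) • x - x = (-t) • x := by module
      rw [hmt, norm_smul]
      have hle2 : t ≤ ε / (2 * (‖x‖ + 1)) := min_le_right _ _
      have h2 : t * ‖x‖ < ε := by
        calc t * ‖x‖ ≤ (ε / (2 * (‖x‖ + 1))) * ‖x‖ :=
              mul_le_mul_of_nonneg_right hle2 (norm_nonneg x)
          _ < ε := by
              rw [div_mul_eq_mul_div, div_lt_iff₀ (by positivity)]
              nlinarith [norm_nonneg x]
      simpa [abs_of_pos ht0] using h2
    have hmem : (1 - t) • x ∈ C := interior_subset (hball (Metric.mem_ball.mpr hdist))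
    have hle := hxmin _ hmem
    rw [psiH_smul, cnorm1_real_smul, abs_of_pos (by linarith : (0:ℝ) < 1 - t)] at hle
    have hN0 : cnorm1 (psiH Ψ x) ≤ 0 := by nlinarith [cnorm1_nonneg (psiH Ψ x)]
    exact cnorm1_eq_zero (le_antisymm hN0 (cnorm1_nonneg _))
  have hQmem : ∀ x ∈ C, psiH Ψ x = 0 → x ∈ QSet C Ψ := by
    intro x hx h
    exact ⟨hx, fun χ _ => by rw [h, cnorm1_zero]; exact cnorm1_nonneg _⟩
  have key2 : ∀ xd ∈ XdSet C L Ψ ∩ interior C, ∃ w : Fin p' → ℂ, rePsi Ψ w = gradL xd := by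
    rintro x ⟨⟨hxQ, hxLmin⟩, hxint⟩
    have hx0 : psiH Ψ x = 0 := key1 x ⟨⟨hxQ, hxLmin⟩, hxint⟩
    obtain ⟨ε, hε, hball⟩ := Metric.isOpen_iff.mp isOpen_interior x hxint
    have hgperp : ∀ v ∈ (LinearMap.range (rePsiLin Ψ))ᗮ, ⟪v, gradL x⟫ = 0 := by
      intro v hv
      have hv0 : psiH Ψ v = 0 := (mem_orth_iff Ψ v).mp hv
      set δ : ℝ := ε / (‖v‖ + 1) with hδdef
      have hδ : 0 < δ := by positivity
      have hmin : IsLocalMin (fun t : ℝ => L (x + t • v)) 0 := by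
        have hb : Metric.ball (0:ℝ) δ ∈ nhds (0:ℝ) := Metric.ball_mem_nhds 0 hδ
        refine Filter.eventually_of_mem hb fun t ht => ?_
        have htv : x + t • v ∈ C := by
          refine interior_subset (hball ?_)
          rw [Metric.mem_ball, dist_eq_norm]
          have hmt : x + t • v - x = t • v := by module
          rw [hmt, norm_smul]
          have h2 : |t| < δ := by simpa [Real.dist_eq] using ht
          have hv1 : (0:ℝ) < ‖v‖ + 1 := by positivity
          calc |t| * ‖v‖ ≤ |t| * (‖v‖ + 1) := by nlinarith [abs_nonneg t]
            _ < δ * (‖v‖ + 1) := by nlinarith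
            _ ≤ ε := by rw [hδdef, div_mul_eq_mul_div, mul_div_assoc, div_self (ne_of_gt hv1), mul_one]
        have hq : x + t • v ∈ QSet C Ψ := by
          refine hQmem _ htv ?_
          rw [psiH_add, psiH_smul, hx0, hv0]
          simp
        have hLle := hxLmin _ hq
        simpa using hLle
      have hline : HasDerivAt (fun t : ℝ => x + t • v) v 0 := by
        simpa using ((hasDerivAt_id (0:ℝ)).smul_const v).const_add x
      have hF : HasFDerivAt L (InnerProductSpace.toDual ℝ _ (gradL x))
          ((fun t : ℝ => x + t • v) 0) := by
        simpa using (hLd x).hasFDerivAt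
      have hφd : HasDerivAt (fun t : ℝ => L (x + t • v)) ⟪gradL x, v⟫ 0 := by
        have := hF.comp_hasDerivAt 0 hline
        simp only [InnerProductSpace.toDual_apply_apply] at this
        exact this
      have h0 := hmin.hasDerivAt_eq_zero hφd
      rw [real_inner_comm]; exact h0
    have hgmem : gradL x ∈ LinearMap.range (rePsiLin Ψ) := by
      have hmem2 : gradL x ∈ ((LinearMap.range (rePsiLin Ψ))ᗮ)ᗮ :=
        (Submodule.mem_orthogonal _ _).mpr hgperp
      rwa [Submodule.orthogonal_orthogonal] at hmem2
    exact hgmem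
  refine ⟨key1, ?_, key2, ?_⟩
  · obtain ⟨x, hxd, hxi⟩ := hint
    exact ⟨x, hxd.1.1, key1 x ⟨hxd, hxi⟩⟩
  · obtain ⟨x, hxd, hxi⟩ := hint
    have hx0 : psiH Ψ x = 0 := key1 x ⟨hxd, hxi⟩
    obtain ⟨w, hw⟩ := key2 x ⟨hxd, hxi⟩
    refine ⟨cnorm1 w, cnorm1_nonneg w, x, ⟨hxd.1.1, ?_⟩, hxd.1⟩
    intro χ hχ
    have hgi := grad_ineq hLcv (hLd x) χ
    have hkey : ⟪gradL x, x - χ⟫ ≤ cnorm1 w * cnorm1 (psiH Ψ χ) := by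
      rw [← hw, inner_rePsi]
      have hps : psiH Ψ (x - χ) = -psiH Ψ χ := by rw [psiH_sub, hx0]; simp
      rw [hps]
      calc (∑ j, w j * (starRingEnd ℂ) ((-psiH Ψ χ) j)).re
          ≤ ‖∑ j, w j * (starRingEnd ℂ) ((-psiH Ψ χ) j)‖ := Complex.re_le_norm _
        _ ≤ ∑ j, ‖w j * (starRingEnd ℂ) ((-psiH Ψ χ) j)‖ :=
            norm_sum_le _ _
        _ = ∑ j, ‖w j‖ * ‖psiH Ψ χ j‖ := by
            simp [norm_mul]
        _ ≤ ∑ j, cnorm1 w * ‖psiH Ψ χ j‖ := by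
            refine Finset.sum_le_sum fun j _ => ?_
            refine mul_le_mul_of_nonneg_right ?_ (norm_nonneg _)
            exact Finset.single_le_sum (f := fun j => ‖w j‖)
              (fun i _ => norm_nonneg _) (Finset.mem_univ j)
        _ = cnorm1 w * cnorm1 (psiH Ψ χ) := (Finset.mul_sum _ _ _).symm
    have hinner : ⟪gradL x, x - χ⟫ = -⟪gradL x, χ - x⟫ := by
      rw [show x - χ = -(χ - x) by module, inner_neg_right]
    rw [hx0, cnorm1_zero]
    rw [hinner] at hkey
    linarith
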